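/- Let y, ξ ∈ L²(Ω) be nonnegative a.e. on a set Ω of finite measure, with y(x)/(y(x)+α) + ξ(x)/(ξ(x)+α) ≤ 1 a.e. Then the integral ⟨y, ξ⟩ = ∫_Ω y·ξ dx satisfies 0 ≤ ⟨y, ξ⟩ ≤ α²·|Ω|, where |Ω| is the measure of Ω. -/

import Mathlib

open MeasureTheory

theorem stmt_10 {X : Type*} [MeasurableSpace X] (μ : Measure X) [IsFiniteMeasure μ]
    (α : ℝ) (hα : 0 < α) (y ξ : X → ℝ)
    (hy : ∀ᵐ x ∂μ, 0 ≤ y x) (hξ : ∀ᵐ x ∂μ, 0 ≤ ξ x)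
    (hrel : ∀ᵐ x ∂μ, y x / (y x + α) + ξ x / (ξ x + α) ≤ 1)
    (hint : Integrable (fun x => y x * ξ x) μ) :
    0 ≤ ∫ x, y x * ξ x ∂μ ∧ (∫ x, y x * ξ x ∂μ) ≤ α ^ 2 * (μ Set.univ).toReal := by
  have hbd : ∀ᵐ x ∂μ, y x * ξ x ≤ α ^ 2 := by
    filter_upwards [hy, hξ, hrel] with x hy hξ hrel
    have h1 : 0 < y x + α := by linarith
    have h2 : 0 < ξ x + α := by linarith
    have := (div_add_div _ _ (ne_of_gt h1) (ne_of_gt h2)) ▸ hrel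
    rw [div_le_one (by positivity)] at this
    nlinarith
  constructor
  · exact integral_nonneg_of_ae <| by
      filter_upwards [hy, hξ] with x hy hξ using mul_nonneg hy hξ
  · calc ∫ x, y x * ξ x ∂μ ≤ ∫ _x, α ^ 2 ∂μ :=
          integral_mono_ae hint (integrable_const _) hbd
      _ = α ^ 2 * (μ Set.univ).toReal := by simp [mul_comm, Measure.real]
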